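/- Let J : ℝⁿ × ℝᵏ → ℝ be continuous and let (xₙ, zₙ) be a sequence generated by exact alternate minimization whose energy values converge. Then every accumulation point (x*, z*) of the sequence is a partial optimum, i.e., J(x*, z*) ≤ J(x, z*) for all x and J(x*, z*) ≤ J(x*, z) for all z. -/
import Mathlib

open Filter

/-- Accumulation points of alternate minimization are partial optima. -/
theorem altmin_accumulation_partial_optimum {n k : ℕ}
    (J : (Fin n → ℝ) → (Fin k → ℝ) → ℝ)
    (hJ : Continuous (fun p : (Fin n → ℝ) × (Fin k → ℝ) => J p.1 p.2))
    (x : ℕ → (Fin n → ℝ)) (z : ℕ → (Fin k → ℝ))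
    (hz : ∀ m, ∀ z' : Fin k → ℝ, J (x m) (z (m + 1)) ≤ J (x m) z')
    (hx : ∀ m, ∀ x' : Fin n → ℝ, J (x (m + 1)) (z (m + 1)) ≤ J x' (z (m + 1)))
    (L : ℝ) (hL : Tendsto (fun m => J (x m) (z m)) atTop (nhds L))
    (xs : Fin n → ℝ) (zs : Fin k → ℝ)
    (hacc : MapClusterPt (xs, zs) atTop (fun m => (x m, z m))) :
    (∀ x' : Fin n → ℝ, J xs zs ≤ J x' zs) ∧ (∀ z' : Fin k → ℝ, J xs zs ≤ J xs z') := by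
  obtain ⟨φ, hφ, hconv⟩ := TopologicalSpace.FirstCountableTopology.tendsto_subseq hacc
  have hxφ : Tendsto (fun i => x (φ i)) atTop (nhds xs) :=
    (continuous_fst.tendsto _).comp hconv
  have hzφ : Tendsto (fun i => z (φ i)) atTop (nhds zs) :=
    (continuous_snd.tendsto _).comp hconv
  -- J along the subsequence tends to J xs zs
  have hJconv : Tendsto (fun i => J (x (φ i)) (z (φ i))) atTop (nhds (J xs zs)) :=
    (hJ.tendsto (xs, zs)).comp hconv
  -- but also to L, since it's a subsequence of a sequence tending to L
  have hJL : Tendsto (fun i => J (x (φ i)) (z (φ i))) atTop (nhds L) :=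
    hL.comp hφ.tendsto_atTop
  have hEq : J xs zs = L := tendsto_nhds_unique hJconv hJL
  -- intermediate energies J (x m) (z (m+1)) tend to L by squeeze
  have hmid : Tendsto (fun m => J (x m) (z (m + 1))) atTop (nhds L) := by
    refine tendsto_of_tendsto_of_tendsto_of_le_of_le
      (g := fun m => J (x (m + 1)) (z (m + 1))) (h := fun m => J (x m) (z m))
      (hL.comp (tendsto_add_atTop_nat 1)) hL
      (fun m => hx m (x m)) (fun m => hz m (z m))
  constructor
  · intro x'
    -- use hx at m = φ i - 1 for i ≥ 1
    have h1 : ∀ᶠ i in atTop, J (x (φ i)) (z (φ i)) ≤ J x' (z (φ i)) := by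
      filter_upwards [eventually_ge_atTop 1] with i hi
      have hφi : 1 ≤ φ i := le_trans hi (hφ.le_apply)
      have := hx (φ i - 1) x'
      rwa [Nat.sub_add_cancel hφi] at this
    have h2 : Tendsto (fun i => J x' (z (φ i))) atTop (nhds (J x' zs)) := by
      have : Continuous fun w : Fin k → ℝ => J x' w := by
        have := hJ.comp (Continuous.prodMk_right x')
        exact this
      exact (this.tendsto zs).comp hzφ
    have := le_of_tendsto_of_tendsto hJconv h2 h1
    linarith [this]
  · intro z'
    have h1 : ∀ i, J (x (φ i)) (z (φ i + 1)) ≤ J (x (φ i)) z' := fun i => hz (φ i) z'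
    have hlhs : Tendsto (fun i => J (x (φ i)) (z (φ i + 1))) atTop (nhds L) :=
      hmid.comp hφ.tendsto_atTop
    have h2 : Tendsto (fun i => J (x (φ i)) z') atTop (nhds (J xs z')) := by
      have hc : Continuous fun w : Fin n → ℝ => J w z' := by
        have := hJ.comp (Continuous.prodMk_left z')
        exact this
      exact (hc.tendsto xs).comp hxφ
    have := le_of_tendsto_of_tendsto' hlhs h2 h1
    linarith [this]
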